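/- Let (s_t)_{t≥0} be a semigroup of adjointable isometries on a Hilbert C*-module E. Set E_p := closure of ⋃_{t≥0} (s_t E)^⊥ and E_u := ⋂_{t≥0} s_t E. Then E_p^⊥ = E_u. -/

import Mathlib

open scoped RightActions
open MeasureTheory Filter Topology

noncomputable section

variable {A E : Type*} [CStarAlgebra A] [PartialOrder A] [StarOrderedRing A]
  [NormedAddCommGroup E] [NormedSpace ℂ E] [SMul A E] [CStarModule A E]

local notation "⟪" x ", " y "⟫" => (inner A x y : A)

variable (A) in
/-- Orthogonal complement of a subset of a Hilbert C*-module. -/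
def ortho (F : Set E) : Set E := {x : E | ∀ y ∈ F, ⟪y, x⟫ = 0}

theorem orthocomplement_of_pure_part_is_unitary_part
    [CompleteSpace E]
    (s sa : ℝ → E →ₗ[ℂ] E)
    (hs0 : s 0 = LinearMap.id)
    (hsg : ∀ r t : ℝ, 0 ≤ r → 0 ≤ t → s (r + t) = (s r).comp (s t))
    (hiso : ∀ t : ℝ, 0 ≤ t → ∀ x y : E, ⟪s t x, s t y⟫ = ⟪x, y⟫)
    (hadj : ∀ t : ℝ, 0 ≤ t → ∀ x y : E, ⟪s t x, y⟫ = ⟪x, sa t y⟫) :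
    ortho A (closure (⋃ t ∈ Set.Ici (0 : ℝ), ortho A (Set.range (s t)))) =
      ⋂ t ∈ Set.Ici (0 : ℝ), Set.range (s t) := by
  ext x
  simp only [Set.mem_iInter]
  constructor
  · intro hx t ht
    set p : E := s t (sa t x) with hp
    have hperp : (x - p) ∈ ortho A (Set.range (s t)) := by
      rintro _ ⟨y, rfl⟩
      rw [CStarModule.inner_sub_right, hiso t ht, hadj t ht, sub_self]
    have hmem : (x - p) ∈ closure (⋃ t ∈ Set.Ici (0 : ℝ), ortho A (Set.range (s t))) := by
      apply subset_closure
      exact Set.mem_biUnion ht hperp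
    have h1 : ⟪x - p, x⟫ = 0 := hx _ hmem
    have h2 : ⟪x - p, p⟫ = 0 := by
      rw [← CStarModule.star_inner, hperp p ⟨sa t x, rfl⟩, star_zero]
    have : ⟪x - p, x - p⟫ = 0 := by
      rw [CStarModule.inner_sub_right, h1, h2, sub_self]
    have hxp : x = p := sub_eq_zero.mp (CStarModule.inner_self.mp this)
    exact hxp ▸ ⟨sa t x, rfl⟩
  · intro hx
    intro y hy
    have hcl : IsClosed {y : E | (inner A y x : A) = 0} := by
      have hc : Continuous fun y : E => (inner A y x : A) :=
        CStarModule.continuous_inner.comp (continuous_id.prodMk continuous_const)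
      exact isClosed_eq hc continuous_const
    refine closure_minimal ?_ hcl hy
    rintro z hz
    simp only [Set.mem_iUnion] at hz
    obtain ⟨t, ht, hzt⟩ := hz
    have : ⟪x, z⟫ = 0 := hzt x (hx t ht)
    show ⟪z, x⟫ = 0
    rw [← CStarModule.star_inner, this, star_zero]
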